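/- For the dicyclic group Dic_n = ⟨a,x | a^{2n} = x^4 = x^{-1}axa = e⟩ of order 4n with n ≥ 2, Player 1 has a winning strategy for RAV(Dic_n, {a,x}). -/

import Mathlib

namespace RelatorGames

variable {G : Type*} [Group G]

/-- The letters available in the relator games: elements of `S` and their inverses. -/
def letters (S : Set G) : Set G := S ∪ (fun g => g⁻¹) '' S

/-- Evaluate a history of moves (most recent letter first) to a group element:
the group element represented by the word built so far. -/
def eval (h : List G) : G := h.reverse.prod

/-- A move `m` is legal after history `h`: it is a letter of `S ∪ S⁻¹` and it is not
the inverse of the immediately preceding letter (no backtracking). -/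
def LegalMove (S : Set G) (h : List G) (m : G) : Prop :=
  m ∈ letters S ∧ ∀ p ∈ h.head?, m ≠ p⁻¹

/-- Appending `m` to the history `h` produces a word equal in `G` to some earlier
prefix of the word (equivalently, the walk in the Cayley graph revisits a vertex). -/
def ClosesCycle (h : List G) (m : G) : Prop :=
  ∃ t, t <:+ h ∧ eval t = eval (m :: h)

/-- A strategy: a choice of next letter given the history (most recent letter first). -/
abbrev Strategy (G : Type*) := List G → G

/-- The sequence of histories arising when the first player (moving at even steps)
uses `σ` and the second player (moving at odd steps) uses `τ`. -/
def hist (σ τ : Strategy G) : ℕ → List G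
  | 0 => []
  | k + 1 =>
      (if k % 2 = 0 then σ (hist σ τ k) else τ (hist σ τ k)) :: hist σ τ k

/-- The move made at step `k` in the play of `σ` against `τ`. -/
def moveAt (σ τ : Strategy G) (k : ℕ) : G :=
  if k % 2 = 0 then σ (hist σ τ k) else τ (hist σ τ k)

/-- Step `j` is uneventful: the move made is legal and does not close a cycle. -/
def Ok (S : Set G) (σ τ : Strategy G) (j : ℕ) : Prop :=
  LegalMove S (hist σ τ j) (moveAt σ τ j) ∧ ¬ ClosesCycle (hist σ τ j) (moveAt σ τ j)

/-- In the play of `σ` against `τ`, the player moving at steps congruent to `p` mod 2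
wins the relator achievement game `REL(G,S)`: at the first eventful step, either it is
that player's turn and they legally close a cycle, or it is the opponent's turn and the
opponent has made an illegal move (in particular, has no legal move). -/
def RelWins (S : Set G) (p : ℕ) (σ τ : Strategy G) : Prop :=
  ∃ k : ℕ, (∀ j < k, Ok S σ τ j) ∧
    ((k % 2 = p ∧ LegalMove S (hist σ τ k) (moveAt σ τ k) ∧
        ClosesCycle (hist σ τ k) (moveAt σ τ k)) ∨
      (k % 2 ≠ p ∧ ¬ LegalMove S (hist σ τ k) (moveAt σ τ k)))

/-- In the play of `σ` against `τ`, the player moving at steps congruent to `p` mod 2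
wins the relator avoidance game `RAV(G,S)`: at the first eventful step it is the
opponent's turn, and the opponent either makes an illegal move (in particular, has no
legal move) or closes a cycle. -/
def RavWins (S : Set G) (p : ℕ) (σ τ : Strategy G) : Prop :=
  ∃ k : ℕ, (∀ j < k, Ok S σ τ j) ∧ k % 2 ≠ p ∧
    (¬ LegalMove S (hist σ τ k) (moveAt σ τ k) ∨ ClosesCycle (hist σ τ k) (moveAt σ τ k))

/-- Player 1 has a winning strategy for `REL(G,S)`. -/
def FirstWinsREL (S : Set G) : Prop :=
  ∃ σ : Strategy G, ∀ τ : Strategy G, RelWins S 0 σ τ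

/-- Player 2 has a winning strategy for `REL(G,S)`. -/
def SecondWinsREL (S : Set G) : Prop :=
  ∃ τ : Strategy G, ∀ σ : Strategy G, RelWins S 1 σ τ

/-- Player 1 has a winning strategy for `RAV(G,S)`. -/
def FirstWinsRAV (S : Set G) : Prop :=
  ∃ σ : Strategy G, ∀ τ : Strategy G, RavWins S 0 σ τ

/-- Player 2 has a winning strategy for `RAV(G,S)`. -/
def SecondWinsRAV (S : Set G) : Prop :=
  ∃ τ : Strategy G, ∀ σ : Strategy G, RavWins S 1 σ τ

end RelatorGames

open RelatorGames QuaternionGroup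

namespace RavDic

variable {n : ℕ}

def pletter : QuaternionGroup n → QuaternionGroup n
  | .a _ => xa 0
  | .xa _ => (xa 0)⁻¹

def pairMap (g : QuaternionGroup n) : QuaternionGroup n := g * pletter g

lemma xa_zero_inv : (xa 0 : QuaternionGroup n)⁻¹ = xa n := by
  apply inv_eq_of_mul_eq_one_right
  rw [xa_mul_xa, sub_zero, ← Nat.cast_add, ← two_mul, ZMod.natCast_self, one_def]

lemma pairMap_a (i : ZMod (2*n)) : pairMap (a i) = xa (0 - i) := rfl

lemma pairMap_xa (i : ZMod (2*n)) :
    pairMap (QuaternionGroup.xa i)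
      = QuaternionGroup.a ((n : ZMod (2*n)) + (n : ZMod (2*n)) - i) := by
  show QuaternionGroup.xa i * (xa 0)⁻¹ = _
  rw [xa_zero_inv, xa_mul_xa]

lemma pletter_eq (g : QuaternionGroup n) : g * pletter g = pairMap g := rfl

lemma pletter_pairMap (g : QuaternionGroup n) : pletter (pairMap g) = (pletter g)⁻¹ := by
  cases g with
  | a i => rw [pairMap_a]; rfl
  | xa i => rw [pairMap_xa]; show xa 0 = ((xa 0)⁻¹)⁻¹; rw [inv_inv]

lemma pairMap_pairMap (g : QuaternionGroup n) : pairMap (pairMap g) = g := by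
  show pairMap g * pletter (pairMap g) = g
  rw [pletter_pairMap, ← pletter_eq, mul_assoc, mul_inv_cancel, mul_one]

lemma pairMap_ne (g : QuaternionGroup n) : pairMap g ≠ g := by
  cases g with
  | a i => rw [pairMap_a]; exact fun h => nomatch h
  | xa i => rw [pairMap_xa]; exact fun h => nomatch h

lemma pairMap_one_ne : pairMap (1 : QuaternionGroup n) ≠ 1 := pairMap_ne 1

lemma pletter_mem (g : QuaternionGroup n) :
    pletter g ∈ letters ({QuaternionGroup.a 1, QuaternionGroup.xa 0} :
      Set (QuaternionGroup n)) := by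
  cases g with
  | a i => exact Or.inl (Or.inr rfl)
  | xa i => exact Or.inr ⟨xa 0, Or.inr rfl, rfl⟩

/-! ### Generic game facts -/

section Generic
variable {G : Type*} [Group G] (σ τ : Strategy G)

lemma eval_cons (m : G) (h : List G) : eval (m :: h) = eval h * m := by
  simp [eval]

lemma hist_succ (k : ℕ) : hist σ τ (k + 1) = moveAt σ τ k :: hist σ τ k := rfl

lemma moveAt_even {k : ℕ} (hk : k % 2 = 0) : moveAt σ τ k = σ (hist σ τ k) := if_pos hk

lemma hist_suffix {i j : ℕ} (h : i ≤ j) : hist σ τ i <:+ hist σ τ j := by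
  induction j with
  | zero => rw [Nat.le_zero.mp h]
  | succ j ih =>
      rcases Nat.eq_or_lt_of_le h with rfl | h'
      · exact List.suffix_refl _
      · exact (ih (Nat.lt_succ_iff.mp h')).trans
          (by rw [hist_succ σ τ j]; exact List.suffix_cons _ _)

end Generic

/-- The set of visited vertices. -/
def Visited (σ τ : Strategy (QuaternionGroup n)) (k : ℕ) (g : QuaternionGroup n) : Prop :=
  ∃ t, t <:+ hist σ τ k ∧ eval t = g

/-- Player 1's strategy: toggle the `x`-coordinate. -/
def sigma : Strategy (QuaternionGroup n) := fun h => pletter (eval h)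

lemma eval_hist_even (τ : Strategy (QuaternionGroup n)) {k : ℕ} (hk : k % 2 = 0) :
    eval (hist (sigma (n := n)) τ (k + 1)) = pairMap (eval (hist sigma τ k)) := by
  rw [hist_succ, eval_cons, moveAt_even _ _ hk]; rfl

lemma pair_closed (τ : Strategy (QuaternionGroup n)) (m : ℕ) {g : QuaternionGroup n}
    (hg : Visited (sigma (n := n)) τ (2 * m + 1) g) :
    Visited sigma τ (2 * m + 1) (pairMap g) := by
  induction m generalizing g with
  | zero =>
      obtain ⟨t, ht, rfl⟩ := hg
      have h1 : eval (hist (sigma (n := n)) τ (2 * 0 + 1)) = pairMap 1 :=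
        eval_hist_even τ rfl
      have ht' : t <:+ moveAt (sigma (n := n)) τ 0 :: hist sigma τ 0 := ht
      rcases List.suffix_cons_iff.mp ht' with rfl | h0
      · refine ⟨[], List.nil_suffix, ?_⟩
        have h2 : eval (moveAt (sigma (n := n)) τ 0 :: hist sigma τ 0) = pairMap 1 := h1
        rw [h2, pairMap_pairMap]
        rfl
      · have ht0 : t = [] := List.suffix_nil.mp h0
        subst ht0
        refine ⟨hist (sigma (n := n)) τ (2 * 0 + 1), List.suffix_refl _, ?_⟩
        rw [h1]
        rfl
  | succ m ih =>
      rw [show 2 * (m + 1) + 1 = 2 * m + 1 + 1 + 1 by ring] at hg ⊢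
      obtain ⟨t, ht, rfl⟩ := hg
      rw [hist_succ sigma τ (2 * m + 1 + 1)] at ht
      rcases List.suffix_cons_iff.mp ht with rfl | ht'
      · refine ⟨hist sigma τ (2 * m + 1 + 1), ?_, ?_⟩
        · rw [hist_succ sigma τ (2 * m + 1 + 1)]; exact List.suffix_cons _ _
        · rw [← hist_succ sigma τ (2 * m + 1 + 1),
            eval_hist_even τ (k := 2 * m + 1 + 1) (by omega), pairMap_pairMap]
      · rw [hist_succ sigma τ (2 * m + 1)] at ht'
        rcases List.suffix_cons_iff.mp ht' with rfl | ht''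
        · refine ⟨moveAt (sigma (n := n)) τ (2 * m + 1 + 1) :: hist sigma τ (2 * m + 1 + 1),
            ?_, ?_⟩
          · rw [hist_succ sigma τ (2 * m + 1 + 1)]
          · rw [← hist_succ sigma τ (2 * m + 1 + 1),
              eval_hist_even τ (k := 2 * m + 1 + 1) (by omega),
              ← hist_succ sigma τ (2 * m + 1)]
        · obtain ⟨s, hs, hse⟩ := ih ⟨t, ht'', rfl⟩
          exact ⟨s, hs.trans (hist_suffix sigma τ (by omega)), hse⟩

lemma even_ok (τ : Strategy (QuaternionGroup n)) (k : ℕ) (hk : k % 2 = 0)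
    (hprev : ∀ j < k, Ok ({QuaternionGroup.a 1, QuaternionGroup.xa 0} :
      Set (QuaternionGroup n)) sigma τ j) :
    Ok ({QuaternionGroup.a 1, QuaternionGroup.xa 0} : Set (QuaternionGroup n)) sigma τ k := by
  match k, hk with
  | 0, _ =>
      constructor
      · refine ⟨?_, ?_⟩
        · rw [moveAt_even sigma τ rfl]; exact pletter_mem _
        · intro p hp; simp [hist] at hp
      · rintro ⟨t, ht, he⟩
        have ht0 : t = [] := List.suffix_nil.mp ht
        subst ht0
        rw [← hist_succ sigma τ 0, eval_hist_even τ rfl] at he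
        exact pairMap_one_ne he.symm
  | (j + 1), hk =>
      obtain ⟨m, rfl⟩ : ∃ m, j = 2 * m + 1 := ⟨j / 2, by omega⟩
      have hmove2 : moveAt (sigma (n := n)) τ (2 * m + 1 + 1)
          = pletter (eval (hist sigma τ (2 * m + 1 + 1))) := moveAt_even _ _ hk
      have h3 : eval (hist (sigma (n := n)) τ (2 * m + 1 + 1))
          = eval (hist sigma τ (2 * m + 1)) * moveAt sigma τ (2 * m + 1) := by
        rw [hist_succ sigma τ (2 * m + 1), eval_cons]
      have hvmove : eval (moveAt (sigma (n := n)) τ (2 * m + 1 + 1) ::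
          hist sigma τ (2 * m + 1 + 1))
          = pairMap (eval (hist sigma τ (2 * m + 1 + 1))) := by
        rw [← hist_succ sigma τ (2 * m + 1 + 1), eval_hist_even τ hk]
      have hv_not : ¬ Visited (sigma (n := n)) τ (2 * m + 1)
          (eval (hist sigma τ (2 * m + 1 + 1))) := by
        rintro ⟨t, ht, he⟩
        exact (hprev (2 * m + 1) (Nat.lt_succ_self _)).2
          ⟨t, ht, by rw [he, hist_succ sigma τ (2 * m + 1)]⟩
      have hw_not : ¬ Visited (sigma (n := n)) τ (2 * m + 1)
          (pairMap (eval (hist sigma τ (2 * m + 1 + 1)))) := by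
        intro h
        have h' := pair_closed τ m h
        rw [pairMap_pairMap] at h'
        exact hv_not h'
      constructor
      · refine ⟨?_, ?_⟩
        · rw [hmove2]; exact pletter_mem _
        · intro p hp hcontra
          have hp' : moveAt (sigma (n := n)) τ (2 * m + 1) = p := by
            rw [hist_succ sigma τ (2 * m + 1)] at hp
            simpa using hp
          rw [hmove2] at hcontra
          apply hw_not
          refine ⟨hist sigma τ (2 * m + 1), List.suffix_refl _, ?_⟩
          rw [show pairMap (eval (hist (sigma (n := n)) τ (2 * m + 1 + 1)))
              = eval (hist sigma τ (2 * m + 1 + 1))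
                * pletter (eval (hist sigma τ (2 * m + 1 + 1))) from rfl,
            hcontra, h3, ← hp', mul_inv_cancel_right]
      · rintro ⟨t, ht, he⟩
        rw [hvmove] at he
        rw [hist_succ sigma τ (2 * m + 1)] at ht
        rcases List.suffix_cons_iff.mp ht with rfl | ht'
        · rw [← hist_succ sigma τ (2 * m + 1)] at he
          exact pairMap_ne _ he.symm
        · exact hw_not ⟨t, ht', he⟩

lemma exists_not_ok (hn : 2 ≤ n) (τ : Strategy (QuaternionGroup n)) :
    ∃ k, ¬ Ok ({QuaternionGroup.a 1, QuaternionGroup.xa 0} :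
      Set (QuaternionGroup n)) sigma τ k := by
  by_contra hall
  push_neg at hall
  haveI : NeZero n := ⟨by omega⟩
  have hne : ∀ i j : ℕ, i < j → eval (hist (sigma (n := n)) τ i) ≠ eval (hist sigma τ j) := by
    intro i j hij heq
    obtain ⟨j', rfl⟩ : ∃ j', j = j' + 1 := ⟨j - 1, by omega⟩
    exact (hall j').2 ⟨hist sigma τ i, hist_suffix _ _ (by omega), by rw [hist_succ sigma τ j'] at heq; exact heq⟩
  have hinj : Function.Injective (fun k => eval (hist (sigma (n := n)) τ k)) := by
    intro i j h
    by_contra hij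
    rcases Nat.lt_or_ge i j with h' | h'
    · exact hne i j h' h
    · exact hne j i (by omega) h.symm
  obtain ⟨x, y, hxy, hfe⟩ := Finite.exists_ne_map_eq_of_infinite
    (fun k => eval (hist (sigma (n := n)) τ k))
  exact hxy (hinj hfe)

end RavDic

open RelatorGames in
/-- For the dicyclic group `Dic_n` (`n ≥ 2`) with generators `{a,x}`,
Player 1 has a winning strategy for `RAV(Dic_n, {a,x})`. -/
theorem rav_dicyclic_two_generators (n : ℕ) (hn : 2 ≤ n) :
    FirstWinsRAV
      ({QuaternionGroup.a 1, QuaternionGroup.xa 0} : Set (QuaternionGroup n)) := by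
  classical
  refine ⟨RavDic.sigma, fun τ => ?_⟩
  obtain ⟨k, hk⟩ := RavDic.exists_not_ok hn τ
  have hex : ∃ k, ¬ Ok ({QuaternionGroup.a 1, QuaternionGroup.xa 0} :
      Set (QuaternionGroup n)) RavDic.sigma τ k := ⟨k, hk⟩
  set k₀ := Nat.find hex with hk₀def
  have hmin : ∀ j < k₀, Ok ({QuaternionGroup.a 1, QuaternionGroup.xa 0} :
      Set (QuaternionGroup n)) RavDic.sigma τ j :=
    fun j hj => not_not.mp (Nat.find_min hex hj)
  have hk₀ : ¬ Ok ({QuaternionGroup.a 1, QuaternionGroup.xa 0} :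
      Set (QuaternionGroup n)) RavDic.sigma τ k₀ := Nat.find_spec hex
  have hodd : k₀ % 2 ≠ 0 := fun h => hk₀ (RavDic.even_ok τ k₀ h hmin)
  refine ⟨k₀, hmin, hodd, ?_⟩
  rcases not_and_or.mp hk₀ with h | h
  · exact Or.inl h
  · exact Or.inr (not_not.mp h)
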